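/- arXiv:2307.15662 — 4 statements merged into one kernel-verified Lean document; each statement's English description precedes it below -/
import Mathlib

section
/- The candidate control Lyapunov function V is strictly convex on ℝ^d. -/
open scoped RealInnerProductSpace BigOperators

/-- Action of a `d × d` real matrix on `ℝ^d` (Euclidean space). -/
noncomputable def mApp {d : ℕ} (P : Matrix (Fin d) (Fin d) ℝ)
    (x : EuclideanSpace ℝ (Fin d)) : EuclideanSpace ℝ (Fin d) :=
  Matrix.toEuclideanLin P x

/-- `σ(x) = ⟨x, P(x − μ)⟩`. -/
noncomputable def sig {d : ℕ} (P : Matrix (Fin d) (Fin d) ℝ)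
    (μ x : EuclideanSpace ℝ (Fin d)) : ℝ :=
  ⟪x, mApp P (x - μ)⟫

/-- Candidate control Lyapunov function
`V(x) = ⟨x, P₀ x⟩ + Σ_{l=1}^{L} max(σ_l(x), 0)²`. -/
noncomputable def V {d L : ℕ} (P₀ : Matrix (Fin d) (Fin d) ℝ)
    (P : Fin L → Matrix (Fin d) (Fin d) ℝ) (μ : Fin L → EuclideanSpace ℝ (Fin d))
    (x : EuclideanSpace ℝ (Fin d)) : ℝ :=
  ⟪x, mApp P₀ x⟫ + ∑ l, max (sig (P l) (μ l) x) 0 ^ 2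

lemma mApp_add {d : ℕ} (A : Matrix (Fin d) (Fin d) ℝ) (x y : EuclideanSpace ℝ (Fin d)) :
    mApp A (x + y) = mApp A x + mApp A y := by simp [mApp]

lemma mApp_smul {d : ℕ} (A : Matrix (Fin d) (Fin d) ℝ) (c : ℝ) (x : EuclideanSpace ℝ (Fin d)) :
    mApp A (c • x) = c • mApp A x := by simp [mApp]

lemma mApp_sub {d : ℕ} (A : Matrix (Fin d) (Fin d) ℝ) (x y : EuclideanSpace ℝ (Fin d)) :
    mApp A (x - y) = mApp A x - mApp A y := by simp [mApp]

/-- The key quadratic-form identity (valid for any matrix `A`). -/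
lemma quad_id {d : ℕ} (A : Matrix (Fin d) (Fin d) ℝ) (x y : EuclideanSpace ℝ (Fin d))
    (a b : ℝ) (hab : a + b = 1) :
    ⟪a • x + b • y, mApp A (a • x + b • y)⟫ =
      a * ⟪x, mApp A x⟫ + b * ⟪y, mApp A y⟫ - a * b * ⟪x - y, mApp A (x - y)⟫ := by
  simp only [mApp_add, mApp_smul, mApp_sub, inner_add_left, inner_add_right,
    inner_sub_left, inner_sub_right, real_inner_smul_left, real_inner_smul_right]
  linear_combination (a * ⟪x, mApp A x⟫ + b * ⟪y, mApp A y⟫) * hab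

/-- Positivity of the quadratic form of a positive definite matrix. -/
lemma quad_pos {d : ℕ} {A : Matrix (Fin d) (Fin d) ℝ} (hA : A.PosDef)
    {x : EuclideanSpace ℝ (Fin d)} (hx : x ≠ 0) : 0 < ⟪x, mApp A x⟫ := by
  have hx' : (WithLp.equiv 2 (Fin d → ℝ)) x ≠ 0 := by
    intro h
    apply hx
    ext i
    exact congrFun h i
  have h := hA.dotProduct_mulVec_pos hx'
  refine lt_of_lt_of_eq h ?_
  simp only [mApp, Matrix.toEuclideanLin_apply, dotProduct, PiLp.inner_apply,
    RCLike.inner_apply, starRingEnd_apply]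
  exact Finset.sum_congr rfl fun i _ => mul_comm _ _

lemma quad_strictConvexOn {d : ℕ} {A : Matrix (Fin d) (Fin d) ℝ} (hA : A.PosDef) :
    StrictConvexOn ℝ Set.univ (fun x : EuclideanSpace ℝ (Fin d) => ⟪x, mApp A x⟫) := by
  refine ⟨convex_univ, fun x _ y _ hxy a b ha hb hab => ?_⟩
  simp only [smul_eq_mul]
  rw [quad_id A x y a b hab]
  have hpos : 0 < ⟪x - y, mApp A (x - y)⟫ := quad_pos hA (sub_ne_zero.mpr hxy)
  nlinarith [mul_pos ha hb]

/-- `σ` is convex. -/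
lemma sig_convexOn {d : ℕ} {A : Matrix (Fin d) (Fin d) ℝ} (hA : A.PosDef)
    (μ : EuclideanSpace ℝ (Fin d)) : ConvexOn ℝ Set.univ (sig A μ) := by
  refine ⟨convex_univ, fun x _ y _ a b ha hb hab => ?_⟩
  have hexp : ∀ z : EuclideanSpace ℝ (Fin d), sig A μ z = ⟪z, mApp A z⟫ - ⟪z, mApp A μ⟫ := by
    intro z; simp [sig, mApp_sub, inner_sub_right]
  simp only [hexp]
  have hq := quad_id A x y a b hab
  have hpos : (0:ℝ) ≤ a * b * ⟪x - y, mApp A (x - y)⟫ := by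
    rcases eq_or_ne x y with rfl | hxy
    · simp
    · exact mul_nonneg (mul_nonneg ha hb) (quad_pos hA (sub_ne_zero.mpr hxy)).le
  have hlin : ⟪a • x + b • y, mApp A μ⟫ = a * ⟪x, mApp A μ⟫ + b * ⟪y, mApp A μ⟫ := by
    simp [inner_add_left, real_inner_smul_left, Finset.mul_sum, mul_assoc]
  simp only [smul_eq_mul]
  rw [hq, hlin]
  linarith

/-- Each summand `max (σ l x) 0 ^ 2` is convex. -/
lemma term_convexOn {d : ℕ} {A : Matrix (Fin d) (Fin d) ℝ} (hA : A.PosDef)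
    (μ : EuclideanSpace ℝ (Fin d)) :
    ConvexOn ℝ Set.univ (fun x : EuclideanSpace ℝ (Fin d) => max (sig A μ x) 0 ^ 2) := by
  have hmax : ConvexOn ℝ Set.univ (fun x : EuclideanSpace ℝ (Fin d) => max (sig A μ x) 0) :=
    (sig_convexOn hA μ).sup (convexOn_const 0 convex_univ)
  refine ⟨convex_univ, fun x _ y _ a b ha hb hab => ?_⟩
  set f := fun x : EuclideanSpace ℝ (Fin d) => max (sig A μ x) 0 with hf
  have h1 : f (a • x + b • y) ≤ a * f x + b * f y :=
    hmax.2 (Set.mem_univ x) (Set.mem_univ y) ha hb hab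
  have h0 : (0:ℝ) ≤ f (a • x + b • y) := le_max_right _ _
  have hfx : (0:ℝ) ≤ f x := le_max_right _ _
  have hfy : (0:ℝ) ≤ f y := le_max_right _ _
  have h2 : f (a • x + b • y) ^ 2 ≤ (a * f x + b * f y) ^ 2 := by
    apply pow_le_pow_left₀ h0 h1
  have h3 : (a * f x + b * f y) ^ 2 ≤ a * f x ^ 2 + b * f y ^ 2 := by
    nlinarith [mul_nonneg (mul_nonneg ha hb) (sq_nonneg (f x - f y))]
  calc f (a • x + b • y) ^ 2 ≤ (a * f x + b * f y) ^ 2 := h2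
    _ ≤ a * f x ^ 2 + b * f y ^ 2 := h3
    _ ≤ a • (f x ^ 2) + b • (f y ^ 2) := by simp [smul_eq_mul]

/-- the candidate control Lyapunov function `V` is strictly convex on `ℝ^d`. -/
theorem stmt_3 {d L : ℕ} (P₀ : Matrix (Fin d) (Fin d) ℝ)
    (P : Fin L → Matrix (Fin d) (Fin d) ℝ) (μ : Fin L → EuclideanSpace ℝ (Fin d))
    (hP₀ : P₀.PosDef) (hP : ∀ l, (P l).PosDef) :
    StrictConvexOn ℝ Set.univ (V P₀ P μ) := by
  have hsum : ConvexOn ℝ Set.univ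
      (fun x : EuclideanSpace ℝ (Fin d) => ∑ l, max (sig (P l) (μ l) x) 0 ^ 2) := by
    classical
    have : ∀ s : Finset (Fin L), ConvexOn ℝ Set.univ
        (fun x : EuclideanSpace ℝ (Fin d) => ∑ l ∈ s, max (sig (P l) (μ l) x) 0 ^ 2) := by
      intro s
      induction s using Finset.induction_on with
      | empty => simpa using convexOn_const (0:ℝ) convex_univ
      | insert _ _ h ih =>
        simp only [Finset.sum_insert h]; exact (term_convexOn (hP _) _).add ih
    exact this Finset.univ
  exact (quad_strictConvexOn hP₀).add_convexOn hsum
end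

section
/- The gradient of the candidate control Lyapunov function V vanishes at the origin, ∇V(0) = 0, and the origin is the only critical point: for every x ∈ ℝ^d, ∇V(x) = 0 implies x = 0. -/
open scoped RealInnerProductSpace BigOperators

/-- The gradient formula
`∇V(x) = 2 P₀ x + 2 Σ_{l=1}^{L} max(σ_l(x), 0) · P_l (2x − μ_l)`. -/
noncomputable def gradV {d L : ℕ} (P₀ : Matrix (Fin d) (Fin d) ℝ)
    (P : Fin L → Matrix (Fin d) (Fin d) ℝ) (μ : Fin L → EuclideanSpace ℝ (Fin d))
    (x : EuclideanSpace ℝ (Fin d)) : EuclideanSpace ℝ (Fin d) :=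
  (2 : ℝ) • mApp P₀ x +
    (2 : ℝ) • ∑ l, max (sig (P l) (μ l) x) 0 • mApp (P l) ((2 : ℝ) • x - μ l)

open Matrix in
lemma mApp_zero {d : ℕ} (P : Matrix (Fin d) (Fin d) ℝ) : mApp P 0 = 0 := by
  simp [mApp]

open Matrix in
lemma inner_mApp {d : ℕ} (P : Matrix (Fin d) (Fin d) ℝ)
    (x y : EuclideanSpace ℝ (Fin d)) : ⟪x, mApp P y⟫ = x ⬝ᵥ (P *ᵥ y) := by
  simp [mApp, Matrix.toEuclideanLin, inner, dotProduct, Matrix.mulVec, mul_comm]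

lemma inner_mApp_nonneg {d : ℕ} {P : Matrix (Fin d) (Fin d) ℝ} (hP : P.PosSemidef)
    (x : EuclideanSpace ℝ (Fin d)) : 0 ≤ ⟪x, mApp P x⟫ := by
  rw [inner_mApp]
  simpa using hP.re_dotProduct_nonneg x

lemma inner_mApp_pos {d : ℕ} {P : Matrix (Fin d) (Fin d) ℝ} (hP : P.PosDef)
    {x : EuclideanSpace ℝ (Fin d)} (hx : x ≠ 0) : 0 < ⟪x, mApp P x⟫ := by
  rw [inner_mApp]
  have : (x : Fin d → ℝ) ≠ 0 := fun h => hx (by ext i; exact congrFun h i)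
  simpa using hP.re_dotProduct_pos this

lemma mApp_split {d : ℕ} (P : Matrix (Fin d) (Fin d) ℝ) (x μ : EuclideanSpace ℝ (Fin d)) :
    mApp P ((2:ℝ) • x - μ) = mApp P x + mApp P (x - μ) := by
  unfold mApp
  rw [← map_add]
  congr 1
  rw [two_smul]; abel

/-- `∇V(0) = 0`, and the origin is the only critical point:
`∇V(x) = 0` implies `x = 0`. -/
theorem stmt_5 {d L : ℕ} (P₀ : Matrix (Fin d) (Fin d) ℝ)
    (P : Fin L → Matrix (Fin d) (Fin d) ℝ) (μ : Fin L → EuclideanSpace ℝ (Fin d))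
    (hP₀ : P₀.PosDef) (hP : ∀ l, (P l).PosDef) :
    gradV P₀ P μ 0 = 0 ∧
      ∀ x : EuclideanSpace ℝ (Fin d), gradV P₀ P μ x = 0 → x = 0 := by
  constructor
  · simp [gradV, sig, mApp_zero]
  · intro x h
    by_contra hx
    have h0 : ⟪x, gradV P₀ P μ x⟫ = 0 := by rw [h, inner_zero_right]
    have hexp : ⟪x, gradV P₀ P μ x⟫ =
        2 * ⟪x, mApp P₀ x⟫ +
          2 * ∑ l, max (sig (P l) (μ l) x) 0 *
            (⟪x, mApp (P l) x⟫ + sig (P l) (μ l) x) := by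
      unfold gradV
      rw [inner_add_right, real_inner_smul_right, real_inner_smul_right, inner_sum]
      congr 2
      refine Finset.sum_congr rfl fun l _ => ?_
      rw [real_inner_smul_right, mApp_split, inner_add_right]
      rfl
    have hS : 0 ≤ ∑ l, max (sig (P l) (μ l) x) 0 *
        (⟪x, mApp (P l) x⟫ + sig (P l) (μ l) x) := by
      refine Finset.sum_nonneg fun l _ => ?_
      rcases le_or_gt (sig (P l) (μ l) x) 0 with hs | hs
      · rw [max_eq_right hs, zero_mul]
      · rw [max_eq_left hs.le]
        exact mul_nonneg hs.le (add_nonneg (inner_mApp_nonneg (hP l).posSemidef x) hs.le)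
    have hq : 0 < ⟪x, mApp P₀ x⟫ := inner_mApp_pos hP₀ hx
    rw [hexp] at h0
    linarith
end

section
/- Consider the closed-loop system ẋ = f̂(x) + û(x), where f̂ : ℝ^d → ℝ^d is any map and û is the Sontag feedback: with a(y) = ⟨∇V(y), f̂(y)⟩ and ρ(y) = ρ₀·√(a(y)² + ‖∇V(y)‖⁴) for a constant ρ₀ > 0, set û(y) = −(a(y) + ρ(y))·∇V(y)/‖∇V(y)‖² if ∇V(y) ≠ 0 and a(y) + ρ(y) > 0, and û(y) = 0 otherwise. Let λ > 0 satisfy ⟨x, P₀ x⟩ ≥ λ‖x‖² for all x. Then every differentiable solution x : [0,∞) → ℝ^d with x′(t) = f̂(x(t)) + û(x(t)) for all t ≥ 0 satisfies V(x(t)) ≤ V(x(0))·exp(−ρ₀ λ t) and ‖x(t)‖² ≤ (V(x(0))/λ)·exp(−ρ₀ λ t) for all t ≥ 0; in particular the origin is globally exponentially stable for the closed loop. -/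
open scoped RealInnerProductSpace BigOperators

/-- `a(y) = ⟨∇V(y), f̂(y)⟩`. -/
noncomputable def aFun {d L : ℕ} (P₀ : Matrix (Fin d) (Fin d) ℝ)
    (P : Fin L → Matrix (Fin d) (Fin d) ℝ) (μ : Fin L → EuclideanSpace ℝ (Fin d))
    (fhat : EuclideanSpace ℝ (Fin d) → EuclideanSpace ℝ (Fin d))
    (y : EuclideanSpace ℝ (Fin d)) : ℝ :=
  ⟪gradV P₀ P μ y, fhat y⟫

/-- `ρ(y) = ρ₀·√(a(y)² + ‖∇V(y)‖⁴)`. -/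
noncomputable def rhoFun {d L : ℕ} (P₀ : Matrix (Fin d) (Fin d) ℝ)
    (P : Fin L → Matrix (Fin d) (Fin d) ℝ) (μ : Fin L → EuclideanSpace ℝ (Fin d))
    (fhat : EuclideanSpace ℝ (Fin d) → EuclideanSpace ℝ (Fin d)) (ρ₀ : ℝ)
    (y : EuclideanSpace ℝ (Fin d)) : ℝ :=
  ρ₀ * Real.sqrt (aFun P₀ P μ fhat y ^ 2 + ‖gradV P₀ P μ y‖ ^ 4)

open Classical in
/-- The Sontag feedback: `û(y) = −(a(y) + ρ(y))·∇V(y)/‖∇V(y)‖²` if `∇V(y) ≠ 0` and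
`a(y) + ρ(y) > 0`, and `û(y) = 0` otherwise. -/
noncomputable def uhat {d L : ℕ} (P₀ : Matrix (Fin d) (Fin d) ℝ)
    (P : Fin L → Matrix (Fin d) (Fin d) ℝ) (μ : Fin L → EuclideanSpace ℝ (Fin d))
    (fhat : EuclideanSpace ℝ (Fin d) → EuclideanSpace ℝ (Fin d)) (ρ₀ : ℝ)
    (y : EuclideanSpace ℝ (Fin d)) : EuclideanSpace ℝ (Fin d) :=
  if gradV P₀ P μ y ≠ 0 ∧ 0 < aFun P₀ P μ fhat y + rhoFun P₀ P μ fhat ρ₀ y then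
    (-((aFun P₀ P μ fhat y + rhoFun P₀ P μ fhat ρ₀ y) / ‖gradV P₀ P μ y‖ ^ 2)) •
      gradV P₀ P μ y
  else 0

section aux
variable {d : ℕ} {P : Matrix (Fin d) (Fin d) ℝ}

lemma mApp_add_s14 (a b : EuclideanSpace ℝ (Fin d)) :
    mApp P (a + b) = mApp P a + mApp P b := map_add _ _ _

lemma mApp_sym (hP : P.IsHermitian) (a b : EuclideanSpace ℝ (Fin d)) :
    ⟪mApp P a, b⟫ = ⟪a, mApp P b⟫ :=
  (Matrix.isHermitian_iff_isSymmetric.1 hP) a b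

lemma mApp_inner_nonneg (hP : P.PosDef) (y : EuclideanSpace ℝ (Fin d)) :
    0 ≤ ⟪y, mApp P y⟫ := by
  have h := hP.posSemidef.re_dotProduct_nonneg ((WithLp.equiv 2 _) y)
  simpa [EuclideanSpace.inner_eq_star_dotProduct, mApp, Matrix.toEuclideanLin_apply, dotProduct_comm] using h

lemma hasDerivAt_mApp_comp {x : ℝ → EuclideanSpace ℝ (Fin d)} {v : EuclideanSpace ℝ (Fin d)}
    {t : ℝ} (hx : HasDerivAt x v t) :
    HasDerivAt (fun s => mApp P (x s)) (mApp P v) t := by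
  have := (LinearMap.toContinuousLinearMap
    (Matrix.toEuclideanLin P)).hasFDerivAt.comp_hasDerivAt t hx
  exact this

lemma hasDerivAt_maxsq (s : ℝ) :
    HasDerivAt (fun r : ℝ => max r 0 ^ 2) (2 * max s 0) s := by
  rcases lt_trichotomy s 0 with h | h | h
  · have he : (fun r : ℝ => max r 0 ^ 2) =ᶠ[nhds s] fun _ => (0 : ℝ) := by
      filter_upwards [Iio_mem_nhds h] with r hr
      have : r < 0 := hr
      simp [max_eq_right this.le]
    rw [max_eq_right h.le, mul_zero]
    exact (hasDerivAt_const s (0 : ℝ)).congr_of_eventuallyEq he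
  · subst h
    rw [max_self, mul_zero]
    rw [hasDerivAt_iff_isLittleO]
    rw [Asymptotics.isLittleO_iff]
    intro c hc
    filter_upwards [Metric.ball_mem_nhds (0:ℝ) hc] with r hr
    have h1 : |r| < c := by simpa [Real.dist_eq] using hr
    have h2 : max r 0 ^ 2 ≤ |r| * |r| := by
      rcases le_or_gt r 0 with h | h
      · rw [max_eq_right h]
        have := mul_nonneg (abs_nonneg r) (abs_nonneg r)
        nlinarith
      · rw [max_eq_left h.le, abs_of_pos h]; nlinarith
    have h3 : (0:ℝ) ≤ max r 0 ^ 2 := sq_nonneg _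
    simp only [smul_eq_mul, mul_zero, sub_zero, Real.norm_eq_abs]
    rw [show ((0:ℝ) ⊔ 0) ^ 2 = 0 by simp, sub_zero, abs_of_nonneg h3]
    calc max r 0 ^ 2 ≤ |r| * |r| := h2
      _ ≤ c * |r| := by nlinarith [abs_nonneg r]
  · have he : (fun r : ℝ => max r 0 ^ 2) =ᶠ[nhds s] fun r => r ^ 2 := by
      filter_upwards [Ioi_mem_nhds h] with r hr
      have : (0:ℝ) < r := hr
      simp [max_eq_left this.le]
    rw [max_eq_left h.le]
    have := hasDerivAt_pow 2 s
    norm_num at this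
    exact this.congr_of_eventuallyEq he

end aux

section main
variable {d L : ℕ} {P₀ : Matrix (Fin d) (Fin d) ℝ}
  {P : Fin L → Matrix (Fin d) (Fin d) ℝ} {μ : Fin L → EuclideanSpace ℝ (Fin d)}

lemma hasDerivAt_sig_comp {Q : Matrix (Fin d) (Fin d) ℝ} {m : EuclideanSpace ℝ (Fin d)}
    {x : ℝ → EuclideanSpace ℝ (Fin d)} {v : EuclideanSpace ℝ (Fin d)} {t : ℝ}
    (hx : HasDerivAt x v t) :
    HasDerivAt (fun s => sig Q m (x s)) (⟪x t, mApp Q v⟫ + ⟪v, mApp Q (x t - m)⟫) t := by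
  have h1 : HasDerivAt (fun s => x s - m) v t := hx.sub_const m
  have h2 := hasDerivAt_mApp_comp (P := Q) h1
  simpa [sig] using hx.inner ℝ h2

lemma inner_gradV (hP₀ : P₀.IsHermitian) (hP : ∀ l, (P l).IsHermitian)
    (y v : EuclideanSpace ℝ (Fin d)) :
    ⟪gradV P₀ P μ y, v⟫ =
      (⟪y, mApp P₀ v⟫ + ⟪v, mApp P₀ y⟫) +
      ∑ l, 2 * max (sig (P l) (μ l) y) 0 *
        (⟪y, mApp (P l) v⟫ + ⟪v, mApp (P l) (y - μ l)⟫) := by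
  rw [gradV, inner_add_left, real_inner_smul_left, real_inner_smul_left, sum_inner,
    Finset.mul_sum]
  have h0 : ⟪y, mApp P₀ v⟫ + ⟪v, mApp P₀ y⟫ = 2 * ⟪mApp P₀ y, v⟫ := by
    rw [← mApp_sym hP₀ y v, real_inner_comm v (mApp P₀ y)]; ring
  rw [h0]
  congr 1
  apply Finset.sum_congr rfl
  intro l _
  rw [real_inner_smul_left,
    show (2:ℝ) • y - μ l = y + (y - μ l) by rw [two_smul]; abel,
    mApp_add_s14, inner_add_left, ← mApp_sym (hP l) y v,
    real_inner_comm v (mApp (P l) (y - μ l))]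
  ring

lemma hasDerivAt_V_comp (hP₀ : P₀.IsHermitian) (hP : ∀ l, (P l).IsHermitian)
    {x : ℝ → EuclideanSpace ℝ (Fin d)} {v : EuclideanSpace ℝ (Fin d)} {t : ℝ}
    (hx : HasDerivAt x v t) :
    HasDerivAt (fun s => V P₀ P μ (x s)) ⟪gradV P₀ P μ (x t), v⟫ t := by
  have h0 : HasDerivAt (fun s => (⟪x s, mApp P₀ (x s)⟫ : ℝ))
      (⟪x t, mApp P₀ v⟫ + ⟪v, mApp P₀ (x t)⟫) t := hx.inner ℝ (hasDerivAt_mApp_comp hx)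
  have hl : ∀ l ∈ Finset.univ, HasDerivAt (fun s => max (sig (P l) (μ l) (x s)) 0 ^ 2)
      (2 * max (sig (P l) (μ l) (x t)) 0 *
        (⟪x t, mApp (P l) v⟫ + ⟪v, mApp (P l) (x t - μ l)⟫)) t := fun l _ =>
    (hasDerivAt_maxsq _).comp t (hasDerivAt_sig_comp hx)
  have h := h0.add (HasDerivAt.fun_sum hl)
  rw [inner_gradV hP₀ hP]
  exact h

lemma lam_norm_le_V {lam : ℝ}
    (hlb : ∀ z : EuclideanSpace ℝ (Fin d), lam * ‖z‖ ^ 2 ≤ ⟪z, mApp P₀ z⟫)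
    (y : EuclideanSpace ℝ (Fin d)) :
    lam * ‖y‖ ^ 2 ≤ V P₀ P μ y := by
  have h : (0:ℝ) ≤ ∑ l, max (sig (P l) (μ l) y) 0 ^ 2 :=
    Finset.sum_nonneg fun l _ => sq_nonneg _
  have := hlb y
  rw [V]; linarith

lemma two_V_le (hP₀ : P₀.IsHermitian) (hP : ∀ l, (P l).PosDef)
    (y : EuclideanSpace ℝ (Fin d)) :
    2 * V P₀ P μ y ≤ ⟪gradV P₀ P μ y, y⟫ := by
  rw [inner_gradV hP₀ (fun l => (hP l).isHermitian) y y, V]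
  have key : ∀ l ∈ Finset.univ, 2 * max (sig (P l) (μ l) y) 0 ^ 2 ≤
      2 * max (sig (P l) (μ l) y) 0 *
        (⟪y, mApp (P l) y⟫ + ⟪y, mApp (P l) (y - μ l)⟫) := by
    intro l _
    have hsig : sig (P l) (μ l) y = ⟪y, mApp (P l) (y - μ l)⟫ := rfl
    set m := max (sig (P l) (μ l) y) 0 with hm
    have hm0 : 0 ≤ m := le_max_right _ _
    have hq : 0 ≤ ⟪y, mApp (P l) y⟫ := mApp_inner_nonneg (hP l) y
    have hms : m * ⟪y, mApp (P l) (y - μ l)⟫ = m * m := by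
      rw [← hsig]
      rcases le_or_gt (sig (P l) (μ l) y) 0 with h | h
      · rw [hm, max_eq_right h]; ring
      · rw [hm, max_eq_left h.le]
    nlinarith [mul_nonneg hm0 hq]
  have hsum := Finset.sum_le_sum key
  have h2 : 2 * ∑ l, max (sig (P l) (μ l) y) 0 ^ 2
      = ∑ l, 2 * max (sig (P l) (μ l) y) 0 ^ 2 := Finset.mul_sum _ _ _
  linarith

lemma lam_V_le_grad_sq {lam : ℝ} (hlam : 0 < lam) (hP₀ : P₀.IsHermitian)
    (hP : ∀ l, (P l).PosDef)
    (hlb : ∀ z : EuclideanSpace ℝ (Fin d), lam * ‖z‖ ^ 2 ≤ ⟪z, mApp P₀ z⟫)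
    (y : EuclideanSpace ℝ (Fin d)) :
    lam * V P₀ P μ y ≤ ‖gradV P₀ P μ y‖ ^ 2 := by
  by_cases hy : y = 0
  · subst hy
    have hV0 : V P₀ P μ (0 : EuclideanSpace ℝ (Fin d)) = 0 := by
      simp [V, sig]
    rw [hV0, mul_zero]
    positivity
  · have hVlb := lam_norm_le_V (P := P) (μ := μ) hlb y
    have hV0 : 0 ≤ V P₀ P μ y := le_trans (by positivity) hVlb
    have h2V := two_V_le (P := P) (μ := μ) hP₀ hP y
    have hCS : ⟪gradV P₀ P μ y, y⟫ ≤ ‖gradV P₀ P μ y‖ * ‖y‖ := real_inner_le_norm _ _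
    have hy2 : 0 < ‖y‖ := norm_pos_iff.mpr hy
    have h2V' : 2 * V P₀ P μ y ≤ ‖gradV P₀ P μ y‖ * ‖y‖ := le_trans h2V hCS
    have e1 : lam * V P₀ P μ y * ‖y‖ ^ 2 ≤ V P₀ P μ y * V P₀ P μ y := by
      nlinarith [mul_nonneg hV0 (sub_nonneg.2 hVlb)]
    have e2 : (2 * V P₀ P μ y) * (2 * V P₀ P μ y) ≤
        (‖gradV P₀ P μ y‖ * ‖y‖) * (‖gradV P₀ P μ y‖ * ‖y‖) :=
      mul_self_le_mul_self (by linarith) h2V'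
    have h4 : lam * V P₀ P μ y * ‖y‖ ^ 2 ≤ ‖gradV P₀ P μ y‖ ^ 2 * ‖y‖ ^ 2 := by
      nlinarith [mul_nonneg (mul_nonneg hlam.le hV0) (sq_nonneg ‖y‖)]
    exact le_of_mul_le_mul_right h4 (pow_pos hy2 2)

lemma key_ineq (fhat : EuclideanSpace ℝ (Fin d) → EuclideanSpace ℝ (Fin d))
    {ρ₀ : ℝ} (hρ₀ : 0 < ρ₀) (y : EuclideanSpace ℝ (Fin d)) :
    ⟪gradV P₀ P μ y, fhat y + uhat P₀ P μ fhat ρ₀ y⟫ ≤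
      -(ρ₀ * ‖gradV P₀ P μ y‖ ^ 2) := by
  have hfa : ⟪gradV P₀ P μ y, fhat y⟫ = aFun P₀ P μ fhat y := rfl
  have hsq : ‖gradV P₀ P μ y‖ ^ 2 ≤
      Real.sqrt (aFun P₀ P μ fhat y ^ 2 + ‖gradV P₀ P μ y‖ ^ 4) := by
    have harg : (0:ℝ) ≤ aFun P₀ P μ fhat y ^ 2 + ‖gradV P₀ P μ y‖ ^ 4 := by positivity
    nlinarith [Real.sq_sqrt harg, Real.sqrt_nonneg
      (aFun P₀ P μ fhat y ^ 2 + ‖gradV P₀ P μ y‖ ^ 4),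
      sq_nonneg (Real.sqrt (aFun P₀ P μ fhat y ^ 2 + ‖gradV P₀ P μ y‖ ^ 4)
        - ‖gradV P₀ P μ y‖ ^ 2), sq_nonneg (aFun P₀ P μ fhat y)]
  have hrge : ρ₀ * ‖gradV P₀ P μ y‖ ^ 2 ≤ rhoFun P₀ P μ fhat ρ₀ y := by
    simp only [rhoFun]
    exact mul_le_mul_of_nonneg_left hsq hρ₀.le
  rw [inner_add_right]
  simp only [uhat]
  split_ifs with h
  · obtain ⟨hg0, _⟩ := h
    rw [real_inner_smul_right, real_inner_self_eq_norm_sq]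
    have hG : (0:ℝ) < ‖gradV P₀ P μ y‖ ^ 2 := by
      have := norm_pos_iff.mpr hg0
      positivity
    have hcalc : -((aFun P₀ P μ fhat y + rhoFun P₀ P μ fhat ρ₀ y) / ‖gradV P₀ P μ y‖ ^ 2)
        * ‖gradV P₀ P μ y‖ ^ 2 = -(aFun P₀ P μ fhat y + rhoFun P₀ P μ fhat ρ₀ y) := by
      field_simp
    rw [hcalc, hfa]
    linarith
  · rw [inner_zero_right, add_zero, hfa]
    by_cases hg0 : gradV P₀ P μ y = 0
    · have ha0 : aFun P₀ P μ fhat y = 0 := by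
        rw [aFun, hg0, inner_zero_left]
      rw [ha0, hg0]
      simp
    · push_neg at h
      have hle := h hg0
      linarith

end main

/-- for the closed-loop system `ẋ = f̂(x) + û(x)` with the Sontag
feedback `û` (ρ₀ > 0), if `λ > 0` satisfies `⟨x, P₀ x⟩ ≥ λ‖x‖²` for all `x`, then every
differentiable solution `x : [0,∞) → ℝ^d` satisfies
`V(x(t)) ≤ V(x(0))·exp(−ρ₀ λ t)` and `‖x(t)‖² ≤ (V(x(0))/λ)·exp(−ρ₀ λ t)` for all
`t ≥ 0`; in particular the origin is globally exponentially stable. -/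
theorem stmt_14 {d L : ℕ} (P₀ : Matrix (Fin d) (Fin d) ℝ)
    (P : Fin L → Matrix (Fin d) (Fin d) ℝ) (μ : Fin L → EuclideanSpace ℝ (Fin d))
    (hP₀ : P₀.PosDef) (hP : ∀ l, (P l).PosDef)
    (fhat : EuclideanSpace ℝ (Fin d) → EuclideanSpace ℝ (Fin d))
    (ρ₀ : ℝ) (hρ₀ : 0 < ρ₀) (lam : ℝ) (hlam : 0 < lam)
    (hlb : ∀ x : EuclideanSpace ℝ (Fin d), lam * ‖x‖ ^ 2 ≤ ⟪x, mApp P₀ x⟫)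
    (x : ℝ → EuclideanSpace ℝ (Fin d))
    (hx : ∀ t : ℝ, 0 ≤ t →
      HasDerivAt x (fhat (x t) + uhat P₀ P μ fhat ρ₀ (x t)) t) :
    ∀ t : ℝ, 0 ≤ t →
      V P₀ P μ (x t) ≤ V P₀ P μ (x 0) * Real.exp (-(ρ₀ * lam * t)) ∧
      ‖x t‖ ^ 2 ≤ (V P₀ P μ (x 0) / lam) * Real.exp (-(ρ₀ * lam * t)) := by
  set W : ℝ → ℝ := fun s => V P₀ P μ (x s) with hW
  set D : ℝ → ℝ := fun s =>
    ⟪gradV P₀ P μ (x s), fhat (x s) + uhat P₀ P μ fhat ρ₀ (x s)⟫ with hD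
  have hWd : ∀ t : ℝ, 0 ≤ t → HasDerivAt W (D t) t := fun t ht =>
    hasDerivAt_V_comp hP₀.isHermitian (fun l => (hP l).isHermitian) (hx t ht)
  have hWle : ∀ t : ℝ, 0 ≤ t → D t ≤ -(ρ₀ * lam * W t) := by
    intro t ht
    have h1 := key_ineq (P₀ := P₀) (P := P) (μ := μ) fhat hρ₀ (x t)
    have h2 := lam_V_le_grad_sq (μ := μ) hlam hP₀.isHermitian hP hlb (x t)
    have h3 : ρ₀ * (lam * V P₀ P μ (x t)) ≤ ρ₀ * ‖gradV P₀ P μ (x t)‖ ^ 2 :=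
      mul_le_mul_of_nonneg_left h2 hρ₀.le
    rw [hD, hW]
    simp only
    nlinarith
  set F : ℝ → ℝ := fun s => W s * Real.exp (ρ₀ * lam * s) with hF
  have hFd : ∀ t : ℝ, 0 ≤ t →
      HasDerivAt F (D t * Real.exp (ρ₀ * lam * t) +
        W t * (Real.exp (ρ₀ * lam * t) * (ρ₀ * lam))) t := by
    intro t ht
    have hexp : HasDerivAt (fun s => Real.exp (ρ₀ * lam * s))
        (Real.exp (ρ₀ * lam * t) * (ρ₀ * lam)) t := by
      simpa using ((hasDerivAt_id t).const_mul (ρ₀ * lam)).exp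
    exact (hWd t ht).mul hexp
  have hanti : AntitoneOn F (Set.Ici (0:ℝ)) := by
    apply antitoneOn_of_deriv_nonpos (convex_Ici 0)
    · intro t ht
      exact (hFd t ht).continuousAt.continuousWithinAt
    · rw [interior_Ici]
      intro t ht
      exact (hFd t (le_of_lt ht)).differentiableAt.differentiableWithinAt
    · rw [interior_Ici]
      intro t ht
      rw [(hFd t ht.le).deriv]
      have h2 : D t + ρ₀ * lam * W t ≤ 0 := by linarith [hWle t ht.le]
      have h3 : (0:ℝ) < Real.exp (ρ₀ * lam * t) := Real.exp_pos _
      nlinarith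
  intro t ht
  have hF0 : F t ≤ F 0 := hanti Set.self_mem_Ici ht ht
  have hFt : W t * Real.exp (ρ₀ * lam * t) ≤ W 0 := by
    have : F 0 = W 0 := by simp [hF]
    rw [← this]
    simpa [hF] using hF0
  have hE : (0:ℝ) < Real.exp (ρ₀ * lam * t) := Real.exp_pos _
  have hfirst : V P₀ P μ (x t) ≤ V P₀ P μ (x 0) * Real.exp (-(ρ₀ * lam * t)) := by
    rw [Real.exp_neg, ← div_eq_mul_inv, le_div_iff₀ hE]
    exact hFt
  refine ⟨hfirst, ?_⟩
  have h2 := lam_norm_le_V (P := P) (μ := μ) hlb (x t)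
  rw [div_mul_eq_mul_div, le_div_iff₀ hlam, mul_comm]
  linarith
end

section
/- Let f̂ : ℝ^d → ℝ^d be any map, ρ₀ > 0, κ > 0, a(y) = ⟨∇V(y), f̂(y)⟩ and ρ(y) = ρ₀·√(a(y)² + ‖∇V(y)‖⁴). If λ > 0 satisfies ⟨x, P₀ x⟩ ≥ λ‖x‖² for all x, then the residual set Ω = { y ∈ ℝ^d : ρ(y) ≤ 2κ/ρ₀ } is contained in the compact sublevel set { y ∈ ℝ^d : V(y) ≤ 2κ/(λ ρ₀²) }. -/
open scoped RealInnerProductSpace BigOperators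

lemma mApp_inner_nonneg_s17 {d : ℕ} {Q : Matrix (Fin d) (Fin d) ℝ} (hQ : Q.PosSemidef)
    (x : EuclideanSpace ℝ (Fin d)) : 0 ≤ ⟪x, mApp Q x⟫ := by
  have h := hQ.re_dotProduct_nonneg (WithLp.equiv 2 _ x)
  simpa [mApp, EuclideanSpace.inner_eq_star_dotProduct, Matrix.toEuclideanLin_apply, dotProduct_comm] using h

lemma mApp_cont {d : ℕ} (Q : Matrix (Fin d) (Fin d) ℝ) : Continuous (mApp Q) :=
  LinearMap.continuous_of_finiteDimensional _

lemma inner_gradV_ge {d L : ℕ} (P₀ : Matrix (Fin d) (Fin d) ℝ)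
    (P : Fin L → Matrix (Fin d) (Fin d) ℝ) (μ : Fin L → EuclideanSpace ℝ (Fin d))
    (hP₀ : P₀.PosDef) (hP : ∀ l, (P l).PosDef) (y : EuclideanSpace ℝ (Fin d)) :
    2 * V P₀ P μ y ≤ ⟪gradV P₀ P μ y, y⟫ := by
  have expand : ⟪gradV P₀ P μ y, y⟫ = 2 * ⟪y, mApp P₀ y⟫ +
      2 * ∑ l, max (sig (P l) (μ l) y) 0 * ⟪y, mApp (P l) ((2:ℝ) • y - μ l)⟫ := by
    rw [gradV, inner_add_left, real_inner_smul_left, real_inner_smul_left, sum_inner,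
      real_inner_comm (mApp P₀ y) y]
    congr 2
    refine Finset.sum_congr rfl fun l _ => ?_
    rw [real_inner_smul_left, real_inner_comm]
  rw [expand, V]
  have hterm : ∀ l, max (sig (P l) (μ l) y) 0 ^ 2 ≤
      max (sig (P l) (μ l) y) 0 * ⟪y, mApp (P l) ((2:ℝ) • y - μ l)⟫ := by
    intro l
    have hsplit : ((2:ℝ) • y - μ l) = (y - μ l) + y := by
      rw [two_smul]; abel
    have hiy : ⟪y, mApp (P l) ((2:ℝ) • y - μ l)⟫ =
        sig (P l) (μ l) y + ⟪y, mApp (P l) y⟫ := by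
      rw [hsplit, show mApp (P l) ((y - μ l) + y) = mApp (P l) (y - μ l) + mApp (P l) y from
        map_add _ _ _, inner_add_right, sig]
    rw [hiy, mul_add]
    have h1 : max (sig (P l) (μ l) y) 0 * sig (P l) (μ l) y = max (sig (P l) (μ l) y) 0 ^ 2 := by
      rcases le_total (sig (P l) (μ l) y) 0 with h | h
      · rw [max_eq_right h]; ring
      · rw [max_eq_left h]; ring
    have h2 : 0 ≤ max (sig (P l) (μ l) y) 0 * ⟪y, mApp (P l) y⟫ :=
      mul_nonneg (le_max_right _ _) (mApp_inner_nonneg_s17 (hP l).posSemidef y)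
    linarith
  have hsum : ∑ l, max (sig (P l) (μ l) y) 0 ^ 2 ≤
      ∑ l, max (sig (P l) (μ l) y) 0 * ⟪y, mApp (P l) ((2:ℝ) • y - μ l)⟫ :=
    Finset.sum_le_sum (fun l _ => hterm l)
  linarith

/-- with `a(y) = ⟨∇V(y), f̂(y)⟩` and `ρ(y) = ρ₀·√(a(y)² + ‖∇V(y)‖⁴)`,
`ρ₀ > 0`, `κ > 0`, if `λ > 0` satisfies `⟨x, P₀ x⟩ ≥ λ‖x‖²` for all `x`, then the
residual set `Ω = {y : ρ(y) ≤ 2κ/ρ₀}` is contained in the compact sublevel set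
`{y : V(y) ≤ 2κ/(λ ρ₀²)}`. -/
theorem stmt_17 {d L : ℕ} (P₀ : Matrix (Fin d) (Fin d) ℝ)
    (P : Fin L → Matrix (Fin d) (Fin d) ℝ) (μ : Fin L → EuclideanSpace ℝ (Fin d))
    (hP₀ : P₀.PosDef) (hP : ∀ l, (P l).PosDef)
    (fhat : EuclideanSpace ℝ (Fin d) → EuclideanSpace ℝ (Fin d))
    (ρ₀ : ℝ) (hρ₀ : 0 < ρ₀) (κ : ℝ) (hκ : 0 < κ)
    (lam : ℝ) (hlam : 0 < lam)
    (hlb : ∀ x : EuclideanSpace ℝ (Fin d), lam * ‖x‖ ^ 2 ≤ ⟪x, mApp P₀ x⟫) :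
    {y : EuclideanSpace ℝ (Fin d) | rhoFun P₀ P μ fhat ρ₀ y ≤ 2 * κ / ρ₀} ⊆
        {y : EuclideanSpace ℝ (Fin d) | V P₀ P μ y ≤ 2 * κ / (lam * ρ₀ ^ 2)} ∧
      IsCompact {y : EuclideanSpace ℝ (Fin d) | V P₀ P μ y ≤ 2 * κ / (lam * ρ₀ ^ 2)} := by
  have hVlb : ∀ y, lam * ‖y‖ ^ 2 ≤ V P₀ P μ y := by
    intro y
    have hs : (0:ℝ) ≤ ∑ l, max (sig (P l) (μ l) y) 0 ^ 2 :=
      Finset.sum_nonneg fun l _ => sq_nonneg _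
    have := hlb y
    rw [V]; linarith
  have hV0 : ∀ y, 0 ≤ V P₀ P μ y := fun y =>
    le_trans (by positivity) (hVlb y)
  constructor
  · intro y hy
    simp only [Set.mem_setOf_eq] at hy ⊢
    set g := gradV P₀ P μ y with hg
    -- ‖g‖² ≤ 2κ/ρ₀²
    have hs : Real.sqrt (aFun P₀ P μ fhat y ^ 2 + ‖g‖ ^ 4) ≤ 2 * κ / ρ₀ ^ 2 := by
      rw [rhoFun] at hy
      have he : (2 * κ / ρ₀ ^ 2 : ℝ) = (2 * κ / ρ₀) / ρ₀ := by
        rw [div_div]; ring_nf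
      rw [he, le_div_iff₀ hρ₀, mul_comm]
      exact hy
    have hgle : ‖g‖ ^ 2 ≤ 2 * κ / ρ₀ ^ 2 := by
      refine le_trans ?_ hs
      calc ‖g‖ ^ 2 = Real.sqrt ((‖g‖ ^ 2) ^ 2) := (Real.sqrt_sq (sq_nonneg _)).symm
        _ ≤ _ := Real.sqrt_le_sqrt (by nlinarith [sq_nonneg (aFun P₀ P μ fhat y)])
    have key : 2 * V P₀ P μ y ≤ ⟪g, y⟫ := inner_gradV_ge P₀ P μ hP₀ hP y
    have hip : ⟪g, y⟫ ≤ ‖g‖ * ‖y‖ := real_inner_le_norm g y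
    have hsq : (2 * V P₀ P μ y) * (2 * V P₀ P μ y) ≤ (‖g‖ * ‖y‖) * (‖g‖ * ‖y‖) :=
      mul_self_le_mul_self (by linarith [hV0 y]) (key.trans hip)
    rw [le_div_iff₀ (by positivity)]
    have h2κ : ‖g‖ ^ 2 * ρ₀ ^ 2 ≤ 2 * κ :=
      (le_div_iff₀ (pow_pos hρ₀ 2)).mp hgle
    rcases le_or_gt (V P₀ P μ y) 0 with hV | hV
    · nlinarith [mul_pos hlam (mul_pos hρ₀ hρ₀)]
    · have h1 : (4 * V P₀ P μ y * lam) * V P₀ P μ y ≤ ‖g‖ ^ 2 * V P₀ P μ y := by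
        nlinarith [hVlb y, sq_nonneg (‖g‖ * ‖y‖), norm_nonneg g, norm_nonneg y,
          mul_le_mul_of_nonneg_left (hVlb y) (sq_nonneg ‖g‖),
          mul_le_mul_of_nonneg_left hsq hlam.le]
      have h2 : 4 * V P₀ P μ y * lam ≤ ‖g‖ ^ 2 := le_of_mul_le_mul_right h1 hV
      have h3 : V P₀ P μ y * lam ≤ ‖g‖ ^ 2 := by nlinarith [mul_pos hV hlam]
      nlinarith [mul_le_mul_of_nonneg_right h3 (sq_nonneg ρ₀)]
  · set c : ℝ := 2 * κ / (lam * ρ₀ ^ 2) with hcdef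
    have hVcont : Continuous (V P₀ P μ) := by
      unfold V sig
      exact (continuous_id.inner (mApp_cont P₀)).add (continuous_finset_sum _ fun l _ =>
        ((continuous_id.inner ((mApp_cont (P l)).comp
          (continuous_id.sub continuous_const))).max continuous_const).pow 2)
    have hclosed : IsClosed {y : EuclideanSpace ℝ (Fin d) | V P₀ P μ y ≤ c} :=
      isClosed_le hVcont continuous_const
    refine IsCompact.of_isClosed_subset (isCompact_closedBall (0 : EuclideanSpace ℝ (Fin d))
      (Real.sqrt (c / lam))) hclosed ?_
    intro y hy
    simp only [Set.mem_setOf_eq] at hy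
    rw [Metric.mem_closedBall, dist_zero_right]
    have h1 : ‖y‖ ^ 2 ≤ c / lam := by
      rw [le_div_iff₀ hlam]
      have := hVlb y; linarith
    calc ‖y‖ = Real.sqrt (‖y‖ ^ 2) := (Real.sqrt_sq (norm_nonneg _)).symm
      _ ≤ Real.sqrt (c / lam) := Real.sqrt_le_sqrt h1
end
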